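/- Let p ≥ 3, let λ = λ^M be a p-regular partition of n, and let V be a finite-dimensional FΣ_n-module. Then dim Hom_{A_n}(V↓_{A_n}, Hom_F(E^λ_+ ⊕ E^λ_-, E^λ_±)) = dim Hom_{A_n}(Hom_F(E^λ_±, E^λ_+ ⊕ E^λ_-), V*↓_{A_n}) = dim Hom_{Σ_n}(V, End_F(D^λ)). -/

import Mathlib

open scoped Classical

noncomputable section

namespace IrrTensor

/-! ### Partitions as finitely supported functions `ℕ →₀ ℕ` (0-indexed rows) -/

abbrev Ptn := ℕ →₀ ℕ

/-- `f` is weakly decreasing, i.e. a genuine partition shape. -/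
def IsPtn (f : Ptn) : Prop := ∀ ⦃i j : ℕ⦄, i ≤ j → f j ≤ f i

/-- `f` is a partition of `n`. -/
def IsPtnOf (f : Ptn) (n : ℕ) : Prop := IsPtn f ∧ f.sum (fun _ m => m) = n

/-- `p`-regular: no (positive) part is repeated `p` or more times. -/
def PReg (p : ℕ) (f : Ptn) : Prop :=
  ∀ v : ℕ, 0 < v → (f.support.filter (fun i => f i = v)).card < p

/-- the number of (nonzero) parts of `f`. -/
def height (f : Ptn) : ℕ := f.support.card

/-- row `r` carries a removable node, namely `(r, f r - 1)` (0-indexed). -/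
def RemovableAt (f : Ptn) (r : ℕ) : Prop := f (r + 1) < f r

/-- row `r` carries an addable node, namely `(r, f r)` (0-indexed). -/
def AddableAt (f : Ptn) (r : ℕ) : Prop := r = 0 ∨ f r < f (r - 1)

/-- residue of the removable node in row `r` (the residue of a node `(r, c)`,
both coordinates 0-indexed, is `c - r` mod `p`). -/
def resRem (p : ℕ) (f : Ptn) (r : ℕ) : ZMod p := ((f r - 1 : ℕ) : ZMod p) - (r : ZMod p)

/-- residue of the addable node in row `r`. -/
def resAdd (p : ℕ) (f : Ptn) (r : ℕ) : ZMod p := ((f r : ℕ) : ZMod p) - (r : ZMod p)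

/-- The removable node in row `r` is *normal*: every addable node of the same residue
strictly above it can be matched injectively with a distinct removable node of the same
residue strictly between them (the usual lattice/parenthesis condition). -/
def NormalAt (p : ℕ) (f : Ptn) (r : ℕ) : Prop :=
  RemovableAt f r ∧ ∃ m : ℕ → ℕ,
    Set.InjOn m {s | s < r ∧ AddableAt f s ∧ resAdd p f s = resRem p f r} ∧
    ∀ s, s < r → AddableAt f s → resAdd p f s = resRem p f r →
      s < m s ∧ m s < r ∧ RemovableAt f (m s) ∧ resRem p f (m s) = resRem p f r

/-- The addable node in row `r` is *conormal* (the dual condition). -/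
def ConormalAt (p : ℕ) (f : Ptn) (r : ℕ) : Prop :=
  AddableAt f r ∧ ∃ m : ℕ → ℕ,
    Set.InjOn m {s | r < s ∧ RemovableAt f s ∧ resRem p f s = resAdd p f r} ∧
    ∀ s, r < s → RemovableAt f s → resRem p f s = resAdd p f r →
      r < m s ∧ m s < s ∧ AddableAt f (m s) ∧ resAdd p f (m s) = resAdd p f r

/-- rows carrying a normal node of residue `i`. -/
def normalRows (p : ℕ) (i : ZMod p) (f : Ptn) : Finset ℕ :=
  f.support.filter (fun r => NormalAt p f r ∧ resRem p f r = i)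

/-- `ε_i(f)`: the number of normal nodes of residue `i`. -/
def eps (p : ℕ) (i : ZMod p) (f : Ptn) : ℕ := (normalRows p i f).card

/-- total number of normal nodes. -/
def normalCount (p : ℕ) (f : Ptn) : ℕ :=
  (f.support.filter (fun r => NormalAt p f r)).card

/-- JS-partition: exactly one normal node. -/
def IsJS (p : ℕ) (f : Ptn) : Prop := normalCount p f = 1

/-- remove a node from row `r`. -/
def removeAt (f : Ptn) (r : ℕ) : Ptn := f.update r (f r - 1)

/-- `ẽ_i f`: remove the bottom normal node of residue `i` (junk value `f` if none). -/
def etilde (p : ℕ) (i : ZMod p) (f : Ptn) : Ptn :=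
  if h : (normalRows p i f).Nonempty then removeAt f ((normalRows p i f).max' h) else f

def removableRows (f : Ptn) : Finset ℕ := f.support.filter (fun r => RemovableAt f r)

/-- remove the top removable node. -/
def removeTopNode (f : Ptn) : Ptn :=
  if h : (removableRows f).Nonempty then removeAt f ((removableRows f).min' h) else f

/-- add the bottom addable node (a new row of length 1 at the bottom). -/
def addBottomNode (f : Ptn) : Ptn := f.update f.support.card (f f.support.card + 1)

/-- strict lexicographic order on partitions: `f <lex g`. -/
def lexLT (f g : Ptn) : Prop := ∃ k : ℕ, (∀ i < k, f i = g i) ∧ f k < g k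

def lexLE (f g : Ptn) : Prop := f = g ∨ lexLT f g

/-- the number of nodes of `f` of residue `i` (the residue content). -/
def cnt (p : ℕ) (f : Ptn) (i : ZMod p) : ℕ :=
  ∑ r ∈ f.support, ((Finset.range (f r)).filter (fun c => ((c : ZMod p) - (r : ZMod p)) = i)).card

/-- the two-row partition `(a, b)`. -/
def twoRow (a b : ℕ) : Ptn := Finsupp.single 0 a + Finsupp.single 1 b

/-- the three-row partition `(a, b, c)`. -/
def threeRow (a b c : ℕ) : Ptn :=
  Finsupp.single 0 a + Finsupp.single 1 b + Finsupp.single 2 c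

/-! ### Representation-theoretic generalities -/

variable {F : Type} [Field F] {G : Type} [Group G]
variable {V W : Type} [AddCommGroup V] [Module F V] [AddCommGroup W] [Module F W]

/-- `U` is a subrepresentation of `ρ`. -/
def IsSubrep (ρ : Representation F G V) (U : Submodule F V) : Prop :=
  ∀ (g : G), ∀ v ∈ U, ρ g v ∈ U

/-- the representation induced on a subrepresentation. -/
def subRepn (ρ : Representation F G V) (U : Submodule F V) (h : IsSubrep ρ U) :
    Representation F G ↥U where
  toFun g := (ρ g).restrict (fun v hv => h g v hv)
  map_one' := by
    ext v
    simp [LinearMap.restrict_apply]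
  map_mul' g₁ g₂ := by
    ext v
    simp [LinearMap.restrict_apply]

/-- `f` is a homomorphism of representations from `ρ` to `σ`. -/
def IsRepHom (ρ : Representation F G V) (σ : Representation F G W) (f : V →ₗ[F] W) : Prop :=
  ∀ (g : G) (v : V), f (ρ g v) = σ g (f v)

/-- `ρ ≅ σ` as representations. -/
def RepIso (ρ : Representation F G V) (σ : Representation F G W) : Prop :=
  ∃ e : V ≃ₗ[F] W, IsRepHom ρ σ e.toLinearMap

/-- irreducibility of a representation. -/
def Irr (ρ : Representation F G V) : Prop :=
  (⊥ : Submodule F V) ≠ ⊤ ∧ ∀ U : Submodule F V, IsSubrep ρ U → U = ⊥ ∨ U = ⊤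

/-- the `F`-space of homomorphisms of representations `ρ → σ`. -/
def repHom (ρ : Representation F G V) (σ : Representation F G W) :
    Submodule F (V →ₗ[F] W) where
  carrier := {f | IsRepHom ρ σ f}
  add_mem' := by
    intro f g hf hg gg v
    simp only [LinearMap.add_apply, hf gg v, hg gg v, map_add]
  zero_mem' := by intro g v; simp
  smul_mem' := by
    intro c f hf g v
    simp only [LinearMap.smul_apply, hf g v, map_smul]

/-- `dim Hom_G(ρ, σ)`. -/
def homDim (ρ : Representation F G V) (σ : Representation F G W) : ℕ :=
  Module.finrank F (repHom ρ σ)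

/-- `dim End_G(ρ)`. -/
def endDim (ρ : Representation F G V) : ℕ := homDim ρ ρ

/-- restriction of a representation to a subgroup. -/
def resRep (ρ : Representation F G V) (H : Subgroup G) : Representation F H V :=
  ρ.comp H.subtype

/-- a bundled representation of `G` over `F`. -/
structure RepOb (F : Type) [Field F] (G : Type) [Group G] where
  carrier : Type
  [acg : AddCommGroup carrier]
  [mod : Module F carrier]
  rep : Representation F G carrier

attribute [instance] RepOb.acg RepOb.mod

def RepOb.of (ρ : Representation F G V) : RepOb F G :=
  { carrier := V, rep := ρ }

/-- direct sum of two representations. -/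
def prodRep (ρ : Representation F G V) (σ : Representation F G W) :
    Representation F G (V × W) where
  toFun g := (ρ g).prodMap (σ g)
  map_one' := by
    ext v <;> simp
  map_mul' g h := by
    ext v <;> simp

/-- direct sum of a family of representations. -/
def piRep {ι : Type} (M : ι → RepOb F G) : Representation F G (∀ i, (M i).carrier) where
  toFun g := LinearMap.pi fun i => ((M i).rep g).comp (LinearMap.proj i)
  map_one' := by
    ext v i
    simp
  map_mul' g h := by
    ext v i
    simp

/-- `σ` is (isomorphic to) a composition factor of `ρ`, i.e. a quotient of a
subrepresentation. -/
def IsCompFactor (ρ : Representation F G V) (σ : Representation F G W) : Prop :=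
  ∃ (U : Submodule F V) (hU : IsSubrep ρ U) (ψ : ↥U →ₗ[F] W),
    Function.Surjective ψ ∧ IsRepHom (subRepn ρ U hU) σ ψ

/-- `σ` embeds into `ρ` (is isomorphic to a subrepresentation). -/
def Embeds (σ : Representation F G W) (ρ : Representation F G V) : Prop :=
  ∃ f : W →ₗ[F] V, Function.Injective f ∧ IsRepHom σ ρ f

/-- `σ` is a quotient of `ρ`. -/
def IsQuotientRep (ρ : Representation F G V) (σ : Representation F G W) : Prop :=
  ∃ f : V →ₗ[F] W, Function.Surjective f ∧ IsRepHom ρ σ f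

/-- `σ` is a direct summand of `ρ`. -/
def IsSummandRep (ρ : Representation F G V) (σ : Representation F G W) : Prop :=
  ∃ C : RepOb F G, RepIso ρ (prodRep σ C.rep)

/-- `U` is a simple subrepresentation. -/
def IsSimpleSubrep (ρ : Representation F G V) (U : Submodule F V) : Prop :=
  IsSubrep ρ U ∧ U ≠ ⊥ ∧ ∀ U' ≤ U, IsSubrep ρ U' → U' = ⊥ ∨ U' = U

/-- the socle: the sum of all simple subrepresentations. -/
def socle (ρ : Representation F G V) : Submodule F V := sSup {U | IsSimpleSubrep ρ U}

/-- `ρ` has simple socle. -/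
def HasSimpleSocle (ρ : Representation F G V) : Prop := IsSimpleSubrep ρ (socle ρ)

/-! ### Symmetric and alternating groups, Young subgroups, permutation and Specht modules -/

/-- the sign representation of the symmetric group. -/
def sgnRep (F : Type) [Field F] (n : ℕ) : Representation F (Equiv.Perm (Fin n)) F where
  toFun g := ((Equiv.Perm.sign g : ℤ) : F) • LinearMap.id
  map_one' := by
    simp [Module.End.one_eq_id]
  map_mul' g h := by
    ext
    simp [mul_comm, mul_assoc, mul_smul]

/-- restriction of a representation of `Σ_n` to the alternating group `A_n`. -/
def resAlt {n : ℕ} (ρ : Representation F (Equiv.Perm (Fin n)) V) :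
    Representation F (alternatingGroup (Fin n)) V :=
  ρ.comp (alternatingGroup (Fin n)).subtype

/-- transport of permutations along an equivalence, as a monoid homomorphism. -/
def permCongrHom {α β : Type} (e : α ≃ β) : Equiv.Perm α →* Equiv.Perm β where
  toFun g := (e.symm.trans g).trans e
  map_one' := by ext x; simp
  map_mul' g h := by ext x; simp

/-- the standard embedding `Σ_a × Σ_b → Σ_n` (for `a + b = n`), with `Σ_a` acting on the
first `a` points and `Σ_b` on the last `b` points; its image is the Young subgroup
`Σ_{(a,b)}`. -/
def youngPairHom (a b n : ℕ) (h : a + b = n) :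
    Equiv.Perm (Fin a) × Equiv.Perm (Fin b) →* Equiv.Perm (Fin n) :=
  (permCongrHom (finSumFinEquiv.trans (finCongr h))).comp (Equiv.Perm.sumCongrHom (Fin a) (Fin b))

/-- the standard embedding `Σ_m → Σ_n` for `m ≤ n`. -/
def stdEmbed (m n : ℕ) (h : m + (n - m) = n) : Equiv.Perm (Fin m) →* Equiv.Perm (Fin n) :=
  (youngPairHom m (n - m) n h).comp (MonoidHom.inl _ _)

/-- the outer tensor product of a representation of `A` and one of `B`, as a
representation of `A × B`. -/
def outerTensor {A B : Type} [Group A] [Group B]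
    (ρ : Representation F A V) (σ : Representation F B W) :
    Representation F (A × B) (TensorProduct F V W) :=
  Representation.tprod
    (ρ.comp (MonoidHom.fst A B) : Representation F (A × B) V)
    (σ.comp (MonoidHom.snd A B) : Representation F (A × B) W)

/-- the index of the interval block of the composition `α` containing `x`
(blocks `{0, …, α₀ - 1}`, `{α₀, …, α₀ + α₁ - 1}`, …). -/
def blockOf (α : Ptn) (x : ℕ) : ℕ := sInf {i | x < ∑ j ∈ Finset.range (i + 1), α j}

/-- the position of `x` inside its block: the column of `x` in the tableau obtained by
filling the Young diagram of `α` row by row with `0, 1, 2, …`. -/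
def colOf (α : Ptn) (x : ℕ) : ℕ := x - ∑ j ∈ Finset.range (blockOf α x), α j

/-- the Young subgroup `Σ_α ≤ Σ_n`: permutations preserving each interval block. -/
def youngSubgroup (α : Ptn) (n : ℕ) : Subgroup (Equiv.Perm (Fin n)) where
  carrier := {g | ∀ x : Fin n, blockOf α ((g x : Fin n) : ℕ) = blockOf α (x : ℕ)}
  one_mem' := by intro x; simp
  mul_mem' := by
    intro g h hg hh x
    simpa [Equiv.Perm.mul_apply] using (hg (h x)).trans (hh x)
  inv_mem' := by
    intro g hg x
    simpa using (hg (g⁻¹ x)).symm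

/-- the permutation module `M^α = 1 ↑_{Σ_α}^{Σ_n}`, realized on the cosets
`Σ_n / Σ_α` (whose elements are the `α`-tabloids). -/
def permRep (F : Type) [Field F] (α : Ptn) (n : ℕ) :
    Representation F (Equiv.Perm (Fin n))
      ((Equiv.Perm (Fin n) ⧸ youngSubgroup α n) →₀ F) :=
  { toFun := fun g => Finsupp.lmapDomain F F (fun x : Equiv.Perm (Fin n) ⧸ youngSubgroup α n => g • x)
    map_one' := by
      ext x y
      simp [Finsupp.lmapDomain_apply, Finsupp.mapDomain_single]
    map_mul' := fun g h => by
      ext x y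
      simp [Finsupp.lmapDomain_apply, Finsupp.mapDomain_single, mul_smul] }

/-- the polytabloid attached to the identity tableau: the signed column sum
`e_{t₀} = ∑_{τ ∈ C_{t₀}} sgn(τ) {τ t₀}`. -/
def spechtGen (F : Type) [Field F] (α : Ptn) (n : ℕ) :
    (Equiv.Perm (Fin n) ⧸ youngSubgroup α n) →₀ F :=
  ∑ τ ∈ Finset.univ.filter
      (fun τ : Equiv.Perm (Fin n) => ∀ x : Fin n, colOf α ((τ x : Fin n) : ℕ) = colOf α (x : ℕ)),
    ((Equiv.Perm.sign τ : ℤ) : F) • Finsupp.single (QuotientGroup.mk τ) 1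

/-- the Specht module `S^α ⊆ M^α`: the span of all polytabloids. -/
def spechtSubmodule (F : Type) [Field F] (α : Ptn) (n : ℕ) :
    Submodule F ((Equiv.Perm (Fin n) ⧸ youngSubgroup α n) →₀ F) :=
  Submodule.span F (Set.range fun g : Equiv.Perm (Fin n) => permRep F α n g (spechtGen F α n))

/-! ### Axiomatic interface for the modular irreducible representations `D^λ`

The family `D^λ` (for `λ` `p`-regular of `n`) is characterized (uniquely, up to
isomorphism) by: each `D^λ` is irreducible, they are pairwise non-isomorphic and exhaust
all irreducibles, `D^λ` occurs as a composition factor of the permutation module `M^λ`,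
and every composition factor `D^μ` of `M^λ` satisfies `μ ≥ λ` lexicographically.
The Mullineux map is characterized by `D^{λ^M} ≅ D^λ ⊗ sgn`. -/
structure SMTheory (F : Type) [Field F] (p n : ℕ) where
  D : Ptn → RepOb F (Equiv.Perm (Fin n))
  mull : Ptn → Ptn
  D_irr : ∀ lam, IsPtnOf lam n → PReg p lam → Irr (D lam).rep
  D_inj : ∀ lam mu, IsPtnOf lam n → PReg p lam → IsPtnOf mu n → PReg p mu →
    RepIso (D lam).rep (D mu).rep → lam = mu
  D_exh : ∀ (W : Type) [AddCommGroup W] [Module F W]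
    (σ : Representation F (Equiv.Perm (Fin n)) W), Irr σ →
      ∃ lam, IsPtnOf lam n ∧ PReg p lam ∧ RepIso σ (D lam).rep
  D_perm : ∀ lam, IsPtnOf lam n → PReg p lam → IsCompFactor (permRep F lam n) (D lam).rep
  D_tri : ∀ lam mu, IsPtnOf lam n → PReg p lam → IsPtnOf mu n → PReg p mu →
    IsCompFactor (permRep F lam n) (D mu).rep → lexLE lam mu
  mull_reg : ∀ lam, IsPtnOf lam n → PReg p lam →
    IsPtnOf (mull lam) n ∧ PReg p (mull lam)
  mull_spec : ∀ lam, IsPtnOf lam n → PReg p lam →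
    RepIso (D (mull lam)).rep ((D lam).rep.tprod (sgnRep F n))

/-! ### Auxiliary infrastructure for the proof -/

section AuxBasic

variable {F : Type} [Field F] {G : Type} [Group G]
variable {X Y Z X' Y' : Type} [AddCommGroup X] [Module F X] [AddCommGroup Y] [Module F Y]
  [AddCommGroup Z] [Module F Z] [AddCommGroup X'] [Module F X'] [AddCommGroup Y'] [Module F Y']

lemma finrank_eq_of_equiv_mem (e : X ≃ₗ[F] Y) (p : Submodule F X) (q : Submodule F Y)
    (h : ∀ x, x ∈ p ↔ e x ∈ q) : Module.finrank F p = Module.finrank F q := by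
  have hq : p.map (e : X →ₗ[F] Y) = q := by
    ext y
    simp only [Submodule.mem_map]
    constructor
    · rintro ⟨x, hx, rfl⟩; exact (h x).1 hx
    · intro hy
      exact ⟨e.symm y, (h _).2 (by simpa using hy), by simp⟩
  rw [← hq, LinearEquiv.finrank_map_eq]

lemma RepIso.refl (ρ : Representation F G X) : RepIso ρ ρ :=
  ⟨LinearEquiv.refl F X, fun _ _ => rfl⟩

lemma RepIso.symm {ρ : Representation F G X} {σ : Representation F G Y}
    (h : RepIso ρ σ) : RepIso σ ρ := by
  obtain ⟨e, he⟩ := h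
  refine ⟨e.symm, fun g w => e.injective ?_⟩
  have := he g (e.symm w)
  simp only [LinearEquiv.coe_coe] at this ⊢
  rw [LinearEquiv.apply_symm_apply, this, LinearEquiv.apply_symm_apply]

lemma RepIso.trans {ρ : Representation F G X} {σ : Representation F G Y}
    {τ : Representation F G Z} (h₁ : RepIso ρ σ) (h₂ : RepIso σ τ) : RepIso ρ τ := by
  obtain ⟨e₁, he₁⟩ := h₁
  obtain ⟨e₂, he₂⟩ := h₂
  refine ⟨e₁.trans e₂, fun g v => ?_⟩
  have h1 := he₁ g v
  have h2 := he₂ g (e₁ v)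
  simp only [LinearEquiv.coe_coe, LinearEquiv.trans_apply] at h1 h2 ⊢
  rw [h1, h2]

lemma homDim_congr_left {ρ : Representation F G X} {σ : Representation F G Y}
    (h : RepIso ρ σ) (τ : Representation F G Z) : homDim ρ τ = homDim σ τ := by
  obtain ⟨e, he⟩ := h
  have hsymm : ∀ (g : G) (w : Y), e.symm (σ g w) = ρ g (e.symm w) := by
    intro g w
    apply e.injective
    have := he g (e.symm w)
    simp only [LinearEquiv.coe_coe] at this ⊢
    rw [LinearEquiv.apply_symm_apply, this, LinearEquiv.apply_symm_apply]
  refine finrank_eq_of_equiv_mem (LinearEquiv.arrowCongr e (LinearEquiv.refl F Z)) _ _ ?_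
  intro f
  constructor
  · intro hf g w
    simp only [LinearEquiv.arrowCongr_apply, LinearEquiv.refl_apply, LinearMap.coe_comp,
      Function.comp_apply, LinearEquiv.coe_coe]
    rw [hsymm g w, hf g (e.symm w)]
  · intro hf g v
    have := hf g (e v)
    simp only [LinearEquiv.arrowCongr_apply, LinearEquiv.refl_apply, LinearMap.coe_comp,
      Function.comp_apply, LinearEquiv.coe_coe] at this
    rw [hsymm g (e v)] at this
    simpa [LinearEquiv.symm_apply_apply] using this

lemma homDim_congr_right (ρ : Representation F G X) {σ : Representation F G Y}
    {τ : Representation F G Z} (h : RepIso σ τ) : homDim ρ σ = homDim ρ τ := by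
  obtain ⟨e, he⟩ := h
  refine finrank_eq_of_equiv_mem (LinearEquiv.arrowCongr (LinearEquiv.refl F X) e) _ _ ?_
  intro f
  constructor
  · intro hf g v
    simp only [LinearEquiv.arrowCongr_apply, LinearEquiv.refl_symm, LinearEquiv.refl_apply,
      LinearMap.coe_comp, Function.comp_apply, LinearEquiv.coe_coe]
    rw [hf g v]
    exact he g (f v)
  · intro hf g v
    apply e.injective
    have := hf g v
    simp only [LinearEquiv.arrowCongr_apply, LinearEquiv.refl_symm, LinearEquiv.refl_apply,
      LinearMap.coe_comp, Function.comp_apply, LinearEquiv.coe_coe] at this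
    have h1 := he g (f v)
    simp only [LinearEquiv.coe_coe] at h1
    rw [this, h1]

/-- direct product of two submodules is linearly equivalent to the product. -/
def prodSubEquiv (p : Submodule F X) (q : Submodule F Y) :
    ↥(p.prod q) ≃ₗ[F] (↥p × ↥q) where
  toFun x := (⟨x.1.1, x.2.1⟩, ⟨x.1.2, x.2.2⟩)
  map_add' x y := rfl
  map_smul' c x := rfl
  invFun x := ⟨(x.1.1, x.2.1), ⟨x.1.2, x.2.2⟩⟩
  left_inv x := rfl
  right_inv x := rfl

lemma homDim_prod_right [FiniteDimensional F X] [FiniteDimensional F Y] [FiniteDimensional F Z]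
    (ρ : Representation F G X) (τ₁ : Representation F G Y) (τ₂ : Representation F G Z) :
    homDim ρ (prodRep τ₁ τ₂) = homDim ρ τ₁ + homDim ρ τ₂ := by
  have key : Module.finrank F ((repHom ρ τ₁).prod (repHom ρ τ₂)) =
      Module.finrank F (repHom ρ (prodRep τ₁ τ₂)) := by
    refine finrank_eq_of_equiv_mem ((LinearMap.prodEquiv (R := F) (S := F) (M := X) (M₂ := Y) (M₃ := Z))) _ _ ?_
    rintro ⟨f, g⟩
    constructor
    · rintro ⟨hf, hg⟩ a v
      have h1 : ((LinearMap.prodEquiv (R := F) (S := F) (M := X) (M₂ := Y) (M₃ := Z))) (f, g) = f.prod g := rfl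
      rw [h1]
      simp only [LinearMap.prod_apply, Function.prod]
      rw [hf a v, hg a v]
      rfl
    · intro h
      have h1 : ((LinearMap.prodEquiv (R := F) (S := F) (M := X) (M₂ := Y) (M₃ := Z))) (f, g) = f.prod g := rfl
      rw [h1] at h
      constructor
      · intro a v
        have h2 := h a v
        rw [Prod.ext_iff] at h2
        exact h2.1
      · intro a v
        have h2 := h a v
        rw [Prod.ext_iff] at h2
        exact h2.2
  unfold homDim
  rw [← key]
  rw [LinearEquiv.finrank_eq (prodSubEquiv (repHom ρ τ₁) (repHom ρ τ₂)), Module.finrank_prod]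

lemma RepIso.linHomCongr {σ₁ : Representation F G X} {σ₂ : Representation F G X'}
    {τ₁ : Representation F G Y} {τ₂ : Representation F G Y'}
    (h₁ : RepIso σ₁ σ₂) (h₂ : RepIso τ₁ τ₂) : RepIso (σ₁.linHom τ₁) (σ₂.linHom τ₂) := by
  obtain ⟨e₁, he₁⟩ := h₁
  obtain ⟨e₂, he₂⟩ := h₂
  have hsymm : ∀ (g : G) (w : X'), e₁.symm (σ₂ g w) = σ₁ g (e₁.symm w) := by
    intro g w
    apply e₁.injective
    have := he₁ g (e₁.symm w)
    simp only [LinearEquiv.coe_coe] at this ⊢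
    rw [LinearEquiv.apply_symm_apply, this, LinearEquiv.apply_symm_apply]
  refine ⟨LinearEquiv.arrowCongr e₁ e₂, fun g f => ?_⟩
  apply LinearMap.ext
  intro x
  simp only [LinearEquiv.coe_coe, LinearEquiv.arrowCongr_apply, Representation.linHom_apply,
    LinearMap.coe_comp, Function.comp_apply]
  rw [hsymm g⁻¹ x]
  have := he₂ g (f (σ₁ g⁻¹ (e₁.symm x)))
  simp only [LinearEquiv.coe_coe] at this
  rw [this]

lemma RepIso.prodCongr {σ₁ : Representation F G X} {σ₂ : Representation F G X'}
    {τ₁ : Representation F G Y} {τ₂ : Representation F G Y'}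
    (h₁ : RepIso σ₁ σ₂) (h₂ : RepIso τ₁ τ₂) : RepIso (prodRep σ₁ τ₁) (prodRep σ₂ τ₂) := by
  obtain ⟨e₁, he₁⟩ := h₁
  obtain ⟨e₂, he₂⟩ := h₂
  refine ⟨e₁.prodCongr e₂, fun g v => ?_⟩
  have h1 := he₁ g v.1
  have h2 := he₂ g v.2
  simp only [LinearEquiv.coe_coe] at h1 h2
  simp only [LinearEquiv.coe_coe, LinearEquiv.prodCongr_apply]
  exact Prod.ext h1 h2

lemma prodRep_swap (σ : Representation F G X) (τ : Representation F G Y) :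
    RepIso (prodRep σ τ) (prodRep τ σ) :=
  ⟨LinearEquiv.prodComm F X Y, fun g v => rfl⟩

lemma linHom_prodRep_right (σ : Representation F G X) (τ₁ : Representation F G Y)
    (τ₂ : Representation F G Z) :
    RepIso (prodRep (σ.linHom τ₁) (σ.linHom τ₂)) (σ.linHom (prodRep τ₁ τ₂)) := by
  refine ⟨(LinearMap.prodEquiv (R := F) (S := F) (M := X) (M₂ := Y) (M₃ := Z)), fun g f => ?_⟩
  apply LinearMap.ext
  intro x
  rfl

end AuxBasic

section AuxComp

variable {F : Type} [Field F] {G G' : Type} [Group G] [Group G']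
variable {X Y Z : Type} [AddCommGroup X] [Module F X] [AddCommGroup Y] [Module F Y]
  [AddCommGroup Z] [Module F Z]

lemma repHom_comp_eq (φ : G' →* G) (hφ : Function.Surjective φ)
    (σ : Representation F G X) (τ : Representation F G Y) :
    repHom (σ.comp φ) (τ.comp φ) = repHom σ τ := by
  ext f
  constructor
  · intro h g v
    obtain ⟨g', rfl⟩ := hφ g
    exact h g' v
  · intro h g' v
    exact h (φ g') v

lemma homDim_comp_eq (φ : G' →* G) (hφ : Function.Surjective φ)
    (σ : Representation F G X) (τ : Representation F G Y) :
    homDim (σ.comp φ) (τ.comp φ) = homDim σ τ := by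
  unfold homDim
  rw [repHom_comp_eq φ hφ]

lemma linHom_comp (φ : G' →* G) (σ : Representation F G X) (τ : Representation F G Y) :
    (σ.linHom τ).comp φ = Representation.linHom (σ.comp φ) (τ.comp φ) := by
  refine MonoidHom.ext fun g' => LinearMap.ext fun f => LinearMap.ext fun x => ?_
  simp only [MonoidHom.comp_apply, Representation.linHom_apply, LinearMap.coe_comp,
    Function.comp_apply, map_inv]

lemma prodRep_comp (φ : G' →* G) (σ : Representation F G X) (τ : Representation F G Y) :
    (prodRep σ τ).comp φ = prodRep (σ.comp φ) (τ.comp φ) := rfl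

lemma sign_coe {n : ℕ} (a : alternatingGroup (Fin n)) :
    Equiv.Perm.sign (a : Equiv.Perm (Fin n)) = 1 :=
  Equiv.Perm.mem_alternatingGroup.mp a.2

/-- conjugation by a fixed permutation, as an automorphism of the alternating group. -/
def conjHom {n : ℕ} (σ₀ : Equiv.Perm (Fin n)) :
    alternatingGroup (Fin n) →* alternatingGroup (Fin n) where
  toFun a := ⟨σ₀ * ↑a * σ₀⁻¹, by
    rw [Equiv.Perm.mem_alternatingGroup]
    rw [map_mul, map_mul, map_inv, sign_coe]
    simp⟩
  map_one' := Subtype.ext (by simp)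
  map_mul' a b := Subtype.ext (by
    show σ₀ * (↑a * ↑b) * σ₀⁻¹ = σ₀ * ↑a * σ₀⁻¹ * (σ₀ * ↑b * σ₀⁻¹)
    simp [mul_assoc])

lemma conjHom_coe {n : ℕ} (σ₀ : Equiv.Perm (Fin n)) (a : alternatingGroup (Fin n)) :
    ((conjHom σ₀ a : alternatingGroup (Fin n)) : Equiv.Perm (Fin n)) = σ₀ * ↑a * σ₀⁻¹ := rfl

lemma conjHom_surjective {n : ℕ} (σ₀ : Equiv.Perm (Fin n)) :
    Function.Surjective (conjHom σ₀) := by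
  intro b
  refine ⟨⟨σ₀⁻¹ * ↑b * σ₀, ?_⟩, ?_⟩
  · rw [Equiv.Perm.mem_alternatingGroup]
    rw [map_mul, map_mul, map_inv, sign_coe]
    simp
  · exact Subtype.ext (by
      show σ₀ * (σ₀⁻¹ * ↑b * σ₀) * σ₀⁻¹ = ↑b
      simp [mul_assoc])

lemma resAlt_comp_conj {n : ℕ} (ρ : Representation F (Equiv.Perm (Fin n)) X)
    (σ₀ : Equiv.Perm (Fin n)) :
    RepIso ((resAlt ρ).comp (conjHom σ₀)) (resAlt ρ) := by
  have hmul : ∀ (g h : Equiv.Perm (Fin n)) (v : X), ρ g (ρ h v) = ρ (g * h) v := by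
    intro g h v
    rw [map_mul]
    rfl
  have h₁ : (ρ σ₀⁻¹) ∘ₗ (ρ σ₀) = LinearMap.id := by
    rw [← Module.End.mul_eq_comp, ← map_mul, inv_mul_cancel, map_one]
    rfl
  have h₂ : (ρ σ₀) ∘ₗ (ρ σ₀⁻¹) = LinearMap.id := by
    rw [← Module.End.mul_eq_comp, ← map_mul, mul_inv_cancel, map_one]
    rfl
  refine ⟨LinearEquiv.ofLinear (ρ σ₀⁻¹) (ρ σ₀) h₁ h₂, ?_⟩
  intro a v
  show ρ σ₀⁻¹ (ρ (σ₀ * ↑a * σ₀⁻¹) v) = ρ ↑a (ρ σ₀⁻¹ v)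
  rw [hmul, hmul]
  congr 1
  group

lemma resAlt_dual {n : ℕ} (ρ : Representation F (Equiv.Perm (Fin n)) X) :
    resAlt ρ.dual = (resAlt ρ).dual := by
  refine MonoidHom.ext fun a => LinearMap.ext fun f => ?_
  show f ∘ₗ ρ (↑a)⁻¹ = f ∘ₗ ρ ↑(a⁻¹)
  rfl

lemma resAlt_linHom {n : ℕ} (σ : Representation F (Equiv.Perm (Fin n)) X)
    (τ : Representation F (Equiv.Perm (Fin n)) Y) :
    resAlt (σ.linHom τ) = Representation.linHom (resAlt σ) (resAlt τ) :=
  linHom_comp _ σ τ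

end AuxComp

section AuxDual

variable {F : Type} [Field F] {G : Type} [Group G]
variable {X Y Z : Type} [AddCommGroup X] [Module F X] [AddCommGroup Y] [Module F Y]
  [AddCommGroup Z] [Module F Z]

lemma homDim_dual_flip (σ : Representation F G X) (ψ : Representation F G Z) :
    homDim σ ψ.dual = homDim ψ σ.dual := by
  unfold homDim
  let e : (X →ₗ[F] Module.Dual F Z) ≃ₗ[F] (Z →ₗ[F] Module.Dual F X) :=
    { toFun := fun f => f.flip
      map_add' := fun a b => by ext z x; rfl
      map_smul' := fun c a => by ext z x; rfl
      invFun := fun f => f.flip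
      left_inv := fun f => by ext x z; rfl
      right_inv := fun f => by ext z x; rfl }
  refine finrank_eq_of_equiv_mem e (repHom σ ψ.dual) (repHom ψ σ.dual) ?_
  intro f
  have he : ∀ (h : X →ₗ[F] Module.Dual F Z) (z : Z) (x : X), (e h) z x = h x z :=
    fun _ _ _ => rfl
  constructor
  · intro hf g z
    apply LinearMap.ext
    intro v
    have h := LinearMap.congr_fun (hf g⁻¹ v) z
    rw [he]
    have h2 : ((σ.dual g) ((e f) z)) v = f ((σ g⁻¹) v) z := rfl
    rw [h2, h]
    have h3 : ((ψ.dual g⁻¹) (f v)) z = f v ((ψ g⁻¹⁻¹) z) := rfl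
    rw [h3, inv_inv]
  · intro hf g v
    apply LinearMap.ext
    intro z
    have h := LinearMap.congr_fun (hf g⁻¹ z) v
    have h1 : ((e f) ((ψ g⁻¹) z)) v = f v ((ψ g⁻¹) z) := rfl
    have h2 : ((σ.dual g⁻¹) ((e f) z)) v = f ((σ g⁻¹⁻¹) v) z := rfl
    rw [h1, h2] at h
    have h3 : ((ψ.dual g) (f v)) z = f v ((ψ g⁻¹) z) := rfl
    rw [h3, h, inv_inv]

lemma repIso_linHom_dual [FiniteDimensional F X] [FiniteDimensional F Y]
    (σ : Representation F G X) (τ : Representation F G Y) :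
    RepIso (τ.linHom σ) ((σ.linHom τ).dual) := by
  let Φ : (Y →ₗ[F] X) →ₗ[F] Module.Dual F (X →ₗ[F] Y) :=
    { toFun := fun g => (LinearMap.trace F X) ∘ₗ (LinearMap.llcomp F X Y X g)
      map_add' := by
        intro a b
        ext f
        simp [LinearMap.add_comp]
      map_smul' := by
        intro c a
        ext f
        simp [LinearMap.smul_comp] }
  have hinj : Function.Injective Φ := by
    rw [injective_iff_map_eq_zero]
    intro g hg
    apply LinearMap.ext
    intro y
    rw [LinearMap.zero_apply, ← Module.forall_dual_apply_eq_zero_iff (R := F)]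
    intro φ
    have h1 : g ∘ₗ (dualTensorHom F X Y (φ ⊗ₜ[F] y)) = dualTensorHom F X X (φ ⊗ₜ[F] (g y)) := by
      ext x
      simp [dualTensorHom_apply]
    have h2 := LinearMap.congr_fun hg (dualTensorHom F X Y (φ ⊗ₜ[F] y))
    simp only [Φ, LinearMap.coe_mk, AddHom.coe_mk, LinearMap.coe_comp, Function.comp_apply,
      LinearMap.llcomp_apply, LinearMap.zero_apply] at h2
    rw [LinearMap.llcomp_apply'] at h2
    rw [h1, LinearMap.trace_eq_contract_apply, contractLeft_apply] at h2
    exact h2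
  have hdim : Module.finrank F (Y →ₗ[F] X) = Module.finrank F (Module.Dual F (X →ₗ[F] Y)) := by
    rw [Subspace.dual_finrank_eq, Module.finrank_linearMap, Module.finrank_linearMap, mul_comm]
  refine ⟨LinearMap.linearEquivOfInjective Φ hinj hdim, ?_⟩
  intro g h
  apply LinearMap.ext
  intro f
  show (LinearMap.trace F X) ((σ g ∘ₗ h ∘ₗ τ g⁻¹) ∘ₗ f) =
    (LinearMap.trace F X) (h ∘ₗ (τ g⁻¹ ∘ₗ f ∘ₗ σ g⁻¹⁻¹))
  rw [inv_inv]
  have hc := LinearMap.trace_comp_comm' (R := F) (σ g) (h ∘ₗ τ g⁻¹ ∘ₗ f)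
  simp only [LinearMap.comp_assoc] at hc ⊢
  exact hc.symm

end AuxDual

section AuxSgn

open scoped TensorProduct

variable {F : Type} [Field F] {n : ℕ}
variable {V X Y : Type} [AddCommGroup V] [Module F V] [AddCommGroup X] [Module F X]
  [AddCommGroup Y] [Module F Y]

lemma sgnRep_eval (g : Equiv.Perm (Fin n)) (c : F) :
    sgnRep F n g c = ((Equiv.Perm.sign g : ℤ) : F) * c := rfl

/-- the space of `sgn`-twisted homomorphisms of representations. -/
def sgnHom (ρ : Representation F (Equiv.Perm (Fin n)) V)
    (W : Representation F (Equiv.Perm (Fin n)) Y) : Submodule F (V →ₗ[F] Y) where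
  carrier := {f | ∀ g v, f (ρ g v) = ((Equiv.Perm.sign g : ℤ) : F) • W g (f v)}
  add_mem' := by
    intro f g hf hg a v
    simp only [LinearMap.add_apply, hf a v, hg a v, map_add, smul_add]
  zero_mem' := by intro a v; simp
  smul_mem' := by
    intro c f hf a v
    rw [LinearMap.smul_apply, LinearMap.smul_apply, hf a v, map_smul, smul_comm]

lemma finrank_sgnHom (ρ : Representation F (Equiv.Perm (Fin n)) V)
    (W : Representation F (Equiv.Perm (Fin n)) Y) :
    Module.finrank F (sgnHom ρ W) = homDim ρ (W.tprod (sgnRep F n)) := by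
  unfold homDim
  let e : (V →ₗ[F] Y) ≃ₗ[F] (V →ₗ[F] (Y ⊗[F] F)) :=
    LinearEquiv.arrowCongr (LinearEquiv.refl F V) (TensorProduct.rid F Y).symm
  refine finrank_eq_of_equiv_mem e (sgnHom ρ W) (repHom ρ (W.tprod (sgnRep F n))) ?_
  intro f
  have he : ∀ (h : V →ₗ[F] Y) (x : V), (e h) x = (h x) ⊗ₜ[F] (1 : F) := by
    intro h x
    simp only [e, LinearEquiv.arrowCongr_apply, LinearEquiv.refl_symm, LinearEquiv.refl_apply,
      TensorProduct.rid_symm_apply]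
  have htp : ∀ (g : Equiv.Perm (Fin n)) (y : Y),
      (W.tprod (sgnRep F n)) g (y ⊗ₜ[F] (1 : F)) =
        W g y ⊗ₜ[F] ((Equiv.Perm.sign g : ℤ) : F) := by
    intro g y
    rw [Representation.tprod_apply, TensorProduct.map_tmul, sgnRep_eval, mul_one]
  constructor
  · intro hf g v
    rw [he, he, htp, hf g v, TensorProduct.smul_tmul, smul_eq_mul, mul_one]
  · intro hf g v
    have h := hf g v
    rw [he, he, htp] at h
    apply (TensorProduct.rid F Y).symm.injective
    rw [TensorProduct.rid_symm_apply, TensorProduct.rid_symm_apply,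
      TensorProduct.smul_tmul, smul_eq_mul, mul_one]
    exact h

lemma repIso_linHom_tprod_sgn (σ : Representation F (Equiv.Perm (Fin n)) X)
    (τ : Representation F (Equiv.Perm (Fin n)) Y) :
    RepIso ((σ.linHom τ).tprod (sgnRep F n)) (σ.linHom (τ.tprod (sgnRep F n))) := by
  let e : ((X →ₗ[F] Y) ⊗[F] F) ≃ₗ[F] (X →ₗ[F] (Y ⊗[F] F)) :=
    (TensorProduct.rid F (X →ₗ[F] Y)).trans
      (LinearEquiv.arrowCongr (LinearEquiv.refl F X) (TensorProduct.rid F Y).symm)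
  have hge : ∀ (h : X →ₗ[F] Y) (c : F) (x : X), (e (h ⊗ₜ[F] c)) x = (c • h x) ⊗ₜ[F] (1 : F) := by
    intro h c x
    simp only [e, LinearEquiv.trans_apply, TensorProduct.rid_tmul, LinearEquiv.arrowCongr_apply,
      LinearEquiv.refl_symm, LinearEquiv.refl_apply, TensorProduct.rid_symm_apply,
      LinearMap.smul_apply]
  refine ⟨e, ?_⟩
  intro g t
  show e (((σ.linHom τ).tprod (sgnRep F n)) g t) = (σ.linHom (τ.tprod (sgnRep F n))) g (e t)
  induction t using TensorProduct.induction_on with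
  | zero => simp only [map_zero]
  | add a b ha hb => simp only [map_add, ha, hb]
  | tmul f c =>
    apply LinearMap.ext
    intro x
    have hL : ((σ.linHom τ).tprod (sgnRep F n)) g (f ⊗ₜ[F] c) =
        ((σ.linHom τ) g f) ⊗ₜ[F] (((Equiv.Perm.sign g : ℤ) : F) * c) := by
      rw [Representation.tprod_apply, TensorProduct.map_tmul, sgnRep_eval]
    rw [hL, hge]
    have hR : ((σ.linHom (τ.tprod (sgnRep F n))) g (e (f ⊗ₜ[F] c))) x =
        (τ.tprod (sgnRep F n)) g ((e (f ⊗ₜ[F] c)) (σ g⁻¹ x)) := rfl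
    rw [hR, hge]
    have htp : (τ.tprod (sgnRep F n)) g ((c • f (σ g⁻¹ x)) ⊗ₜ[F] (1 : F)) =
        (τ g (c • f (σ g⁻¹ x))) ⊗ₜ[F] ((Equiv.Perm.sign g : ℤ) : F) := by
      rw [Representation.tprod_apply, TensorProduct.map_tmul, sgnRep_eval, mul_one]
    rw [htp]
    have happ : ((σ.linHom τ) g f) x = τ g (f (σ g⁻¹ x)) := rfl
    rw [happ, map_smul]
    rw [mul_comm ((Equiv.Perm.sign g : ℤ) : F) c, ← smul_eq_mul]
    rw [smul_eq_mul, mul_smul, ← TensorProduct.smul_tmul', TensorProduct.smul_tmul,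
      smul_eq_mul, mul_one, TensorProduct.smul_tmul']

lemma homDim_resAlt_add (h2F : (2 : F) ≠ 0) {σ₀ : Equiv.Perm (Fin n)}
    (hσ₀ : Equiv.Perm.sign σ₀ = -1)
    (ρ : Representation F (Equiv.Perm (Fin n)) V)
    (W : Representation F (Equiv.Perm (Fin n)) Y)
    [FiniteDimensional F V] [FiniteDimensional F Y] :
    homDim (resAlt ρ) (resAlt W) = homDim ρ W + homDim ρ (W.tprod (sgnRep F n)) := by
  rw [← finrank_sgnHom]
  set S := repHom (resAlt ρ) (resAlt W) with hS
  set P := repHom ρ W with hP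
  set N := sgnHom ρ W with hN
  have hmulρ : ∀ (g h : Equiv.Perm (Fin n)) (v : V), ρ g (ρ h v) = ρ (g * h) v := by
    intro g h v; rw [map_mul]; rfl
  have hmulW : ∀ (g h : Equiv.Perm (Fin n)) (y : Y), W g (W h y) = W (g * h) y := by
    intro g h y; rw [map_mul]; rfl
  have hPS : P ≤ S := fun f hf a v => hf ↑a v
  have hNS : N ≤ S := by
    intro f hf a v
    have h := hf ↑a v
    rw [sign_coe] at h
    have h' : f (ρ ↑a v) = W ↑a (f v) := by simpa using h
    exact h'
  have hPN : P ⊓ N = ⊥ := by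
    rw [eq_bot_iff]
    rintro f ⟨hfP, hfN⟩
    have key : ∀ v, W σ₀ (f v) = 0 := by
      intro v
      have h1 := hfP σ₀ v
      have h2 := hfN σ₀ v
      rw [hσ₀, h1] at h2
      have h3 : ((((-1 : ℤˣ) : ℤ)) : F) = -1 := by push_cast; ring
      rw [h3, neg_smul, one_smul] at h2
      have h4 : (2 : F) • W σ₀ (f v) = 0 := by
        rw [two_smul]
        rw [add_eq_zero_iff_eq_neg]
        exact h2
      rcases smul_eq_zero.mp h4 with h | h
      · exact absurd h h2F
      · exact h
    have hz : ∀ v, f v = 0 := by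
      intro v
      have h4 : W σ₀⁻¹ (W σ₀ (f v)) = f v := by
        rw [hmulW, inv_mul_cancel, map_one]
        rfl
      rw [key v, map_zero] at h4
      exact h4.symm
    exact LinearMap.ext hz
  have hsup : P ⊔ N = S := by
    refine le_antisymm (sup_le hPS hNS) ?_
    intro f hf
    have hfS : ∀ g : Equiv.Perm (Fin n), Equiv.Perm.sign g = 1 → ∀ v, f (ρ g v) = W g (f v) := by
      intro g hg v
      exact hf ⟨g, Equiv.Perm.mem_alternatingGroup.mpr hg⟩ v
    set fσ : V →ₗ[F] Y := (W σ₀) ∘ₗ f ∘ₗ (ρ σ₀⁻¹) with hfσdef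
    have hfσ_app : ∀ v, fσ v = W σ₀ (f (ρ σ₀⁻¹ v)) := fun v => rfl
    have hsconj : ∀ g : Equiv.Perm (Fin n), Equiv.Perm.sign g = 1 →
        Equiv.Perm.sign (σ₀⁻¹ * g * σ₀) = 1 := by
      intro g hg
      rw [map_mul, map_mul, map_inv, hσ₀, hg]
      norm_num
    have hfσ_even : ∀ g, Equiv.Perm.sign g = 1 → ∀ v, fσ (ρ g v) = W g (fσ v) := by
      intro g hg v
      have h1 : σ₀⁻¹ * g = (σ₀⁻¹ * g * σ₀) * σ₀⁻¹ := by group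
      have h2 : σ₀ * (σ₀⁻¹ * g * σ₀) = g * σ₀ := by group
      rw [hfσ_app, hfσ_app, hmulρ, h1, ← hmulρ, hfS _ (hsconj g hg), hmulW, h2, ← hmulW]
    have hodd1 : ∀ g, Equiv.Perm.sign g = -1 → ∀ v, f (ρ g v) = W g (fσ v) := by
      intro g hg v
      have hsgσ : Equiv.Perm.sign (g * σ₀) = 1 := by
        rw [map_mul, hσ₀, hg]; norm_num
      have h2 : g * σ₀ * σ₀⁻¹ = g := by group
      rw [hfσ_app, hmulW, ← hfS _ hsgσ, hmulρ, h2]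
    have hodd2 : ∀ g, Equiv.Perm.sign g = -1 → ∀ v, fσ (ρ g v) = W g (f v) := by
      intro g hg v
      have hsg : Equiv.Perm.sign (σ₀⁻¹ * g) = 1 := by
        rw [map_mul, map_inv, hσ₀, hg]; norm_num
      have h2 : σ₀ * (σ₀⁻¹ * g) = g := by group
      rw [hfσ_app, hmulρ, hfS _ hsg, hmulW, h2]
    have hcast : ∀ g : Equiv.Perm (Fin n), Equiv.Perm.sign g = 1 →
        (((Equiv.Perm.sign g : ℤ)) : F) = 1 := by
      intro g hg; rw [hg]; norm_num
    have hcast' : ∀ g : Equiv.Perm (Fin n), Equiv.Perm.sign g = -1 →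
        (((Equiv.Perm.sign g : ℤ)) : F) = -1 := by
      intro g hg; rw [hg]; push_cast; ring
    set fp : V →ₗ[F] Y := (2 : F)⁻¹ • (f + fσ) with hfpdef
    set fm : V →ₗ[F] Y := (2 : F)⁻¹ • (f - fσ) with hfmdef
    have hfp : fp ∈ P := by
      intro g v
      have happ : fp (ρ g v) = (2 : F)⁻¹ • (f (ρ g v) + fσ (ρ g v)) := rfl
      have happ2 : fp v = (2 : F)⁻¹ • (f v + fσ v) := rfl
      rcases Int.units_eq_one_or (Equiv.Perm.sign g) with hg | hg
      · rw [happ, happ2, hfS g hg v, hfσ_even g hg v, map_smul, map_add]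
      · rw [happ, happ2, hodd1 g hg v, hodd2 g hg v, map_smul, map_add,
          add_comm ((W g) (fσ v)) ((W g) (f v))]
    have hfm : fm ∈ N := by
      intro g v
      have happ : fm (ρ g v) = (2 : F)⁻¹ • (f (ρ g v) - fσ (ρ g v)) := rfl
      have happ2 : fm v = (2 : F)⁻¹ • (f v - fσ v) := rfl
      rcases Int.units_eq_one_or (Equiv.Perm.sign g) with hg | hg
      · rw [happ, happ2, hfS g hg v, hfσ_even g hg v, hcast g hg, one_smul, map_smul, map_sub]
      · rw [happ, happ2, hodd1 g hg v, hodd2 g hg v, hcast' g hg, map_smul, map_sub,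
          neg_one_smul, ← smul_neg, neg_sub]
    have hsplit : f = fp + fm := by
      apply LinearMap.ext
      intro v
      have happ : (fp + fm) v = (2 : F)⁻¹ • (f v + fσ v) + (2 : F)⁻¹ • (f v - fσ v) := rfl
      rw [happ, ← smul_add, add_add_sub_cancel, ← two_smul F (f v), smul_smul,
        inv_mul_cancel₀ h2F, one_smul]
    rw [hsplit]
    exact Submodule.add_mem_sup hfp hfm
  have hfin := Submodule.finrank_sup_add_finrank_inf_eq P N
  rw [hsup, hPN] at hfin
  have hbot : Module.finrank F (⊥ : Submodule F (V →ₗ[F] Y)) = 0 := finrank_bot F _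
  rw [hbot] at hfin
  show Module.finrank F ↥S = Module.finrank F ↥P + Module.finrank F ↥N
  omega

end AuxSgn

section AuxClifford

variable {F : Type} [Field F] {n : ℕ}
variable {X : Type} [AddCommGroup X] [Module F X]
variable {W1 W2 : Type} [AddCommGroup W1] [Module F W1] [AddCommGroup W2] [Module F W2]

lemma irr_prod_stab_false (ρD : Representation F (Equiv.Perm (Fin n)) X) (hIrr : Irr ρD)
    (h1 : (⊥ : Submodule F W1) ≠ ⊤) (h2 : (⊥ : Submodule F W2) ≠ ⊤)
    (e : X ≃ₗ[F] W1 × W2)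
    (hstab : ∀ g : Equiv.Perm (Fin n), ∀ x : X, (e x).2 = 0 → (e (ρD g x)).2 = 0) : False := by
  set K : Submodule F X :=
    LinearMap.ker ((LinearMap.snd F W1 W2) ∘ₗ (e : X →ₗ[F] W1 × W2)) with hK
  have hmemK : ∀ x : X, x ∈ K ↔ (e x).2 = 0 := by
    intro x
    simp [hK, LinearMap.mem_ker]
  have hsub : IsSubrep ρD K := by
    intro g x hx
    rw [hmemK] at hx ⊢
    exact hstab g x hx
  rcases hIrr.2 K hsub with hbot | htop
  · apply h1
    have hz : ∀ w : W1, w = 0 := by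
      intro w
      have hx : e.symm (w, 0) ∈ K := by
        rw [hmemK, e.apply_symm_apply]
      rw [hbot, Submodule.mem_bot] at hx
      have h := congrArg e hx
      rw [e.apply_symm_apply, map_zero] at h
      exact (Prod.ext_iff.mp h).1
    ext w
    simp [hz w]
  · apply h2
    have hz : ∀ w : W2, w = 0 := by
      intro w
      have hx : e.symm (0, w) ∈ K := htop ▸ Submodule.mem_top
      rw [hmemK, e.apply_symm_apply] at hx
      exact hx
    ext w
    simp [hz w]

lemma clifford_twist (ρD : Representation F (Equiv.Perm (Fin n)) X) (hIrr : Irr ρD)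
    [FiniteDimensional F X]
    {σ₀ : Equiv.Perm (Fin n)} (hσ₀ : Equiv.Perm.sign σ₀ = -1)
    (E1 E2 : RepOb F (alternatingGroup (Fin n)))
    (hE1 : Irr E1.rep) (hE2 : Irr E2.rep)
    (hsplit : RepIso (resAlt ρD) (prodRep E1.rep E2.rep)) :
    RepIso E1.rep (E2.rep.comp (conjHom σ₀)) := by
  obtain ⟨e, he⟩ := hsplit
  have hmul : ∀ (g h : Equiv.Perm (Fin n)) (x : X), ρD g (ρD h x) = ρD (g * h) x := by
    intro g h x
    rw [map_mul]
    rfl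
  have he' : ∀ (a : alternatingGroup (Fin n)) (x : X),
      e (ρD ↑a x) = (prodRep E1.rep E2.rep) a (e x) := by
    intro a x
    have h := he a x
    exact h
  have hesymm : ∀ (a : alternatingGroup (Fin n)) (y : E1.carrier × E2.carrier),
      e.symm ((prodRep E1.rep E2.rep) a y) = ρD ↑a (e.symm y) := by
    intro a y
    apply e.injective
    rw [e.apply_symm_apply, he', e.apply_symm_apply]
  set f : E1.carrier →ₗ[F] E2.carrier :=
    (LinearMap.snd F E1.carrier E2.carrier) ∘ₗ (e : X →ₗ[F] E1.carrier × E2.carrier) ∘ₗ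
      (ρD σ₀) ∘ₗ (e.symm : E1.carrier × E2.carrier →ₗ[F] X) ∘ₗ
      (LinearMap.inl F E1.carrier E2.carrier) with hfdef
  have hfapp : ∀ v, f v = (e (ρD σ₀ (e.symm (v, 0)))).2 := fun v => rfl
  have hhom : IsRepHom E1.rep (E2.rep.comp (conjHom σ₀)) f := by
    intro a v
    rw [hfapp, hfapp]
    have h1 : ((E1.rep a v : E1.carrier), (0 : E2.carrier)) =
        (prodRep E1.rep E2.rep) a (v, 0) := by
      have : (prodRep E1.rep E2.rep) a (v, 0) = (E1.rep a v, E2.rep a 0) := rfl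
      rw [this, map_zero]
    rw [h1, hesymm, hmul]
    have h2 : σ₀ * ↑a = ↑(conjHom σ₀ a) * σ₀ := by
      rw [conjHom_coe]
      group
    rw [h2, ← hmul]
    rw [he' (conjHom σ₀ a) (ρD σ₀ (e.symm (v, 0)))]
    rfl
  have hne : f ≠ 0 := by
    intro hf0
    apply irr_prod_stab_false ρD hIrr hE1.1 hE2.1 e
    intro g x hx
    have hstep : ∀ x : X, (e x).2 = 0 → (e (ρD σ₀ x)).2 = 0 := by
      intro x hx
      have hx' : x = e.symm ((e x).1, 0) := by
        apply e.injective
        rw [e.apply_symm_apply]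
        exact Prod.ext rfl hx
      rw [hx']
      have h := LinearMap.congr_fun hf0 (e x).1
      rw [hfapp] at h
      exact h
    have heven : ∀ (a : alternatingGroup (Fin n)) (x : X),
        (e x).2 = 0 → (e (ρD ↑a x)).2 = 0 := by
      intro a x hx
      rw [he']
      show E2.rep a (e x).2 = 0
      rw [hx, map_zero]
    rcases Int.units_eq_one_or (Equiv.Perm.sign g) with hg | hg
    · exact heven ⟨g, Equiv.Perm.mem_alternatingGroup.mpr hg⟩ x hx
    · have hgσ : g * σ₀⁻¹ ∈ alternatingGroup (Fin n) := by
        rw [Equiv.Perm.mem_alternatingGroup, map_mul, map_inv, hg, hσ₀]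
        norm_num
      have hdecomp : ρD g x = ρD ↑(⟨g * σ₀⁻¹, hgσ⟩ : alternatingGroup (Fin n)) (ρD σ₀ x) := by
        rw [hmul]
        congr 1
        group
      rw [hdecomp]
      exact heven _ _ (hstep x hx)
  have hinj : Function.Injective f := by
    have hsub : IsSubrep E1.rep (LinearMap.ker f) := by
      intro a v hv
      rw [LinearMap.mem_ker] at hv ⊢
      rw [hhom a v, hv, map_zero]
    rcases hE1.2 _ hsub with hbot | htop
    · rw [← LinearMap.ker_eq_bot]
      exact hbot
    · exfalso
      apply hne
      apply LinearMap.ext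
      intro v
      have hv : v ∈ LinearMap.ker f := htop ▸ Submodule.mem_top
      simpa using hv
  have hsurj : Function.Surjective f := by
    have hsub : IsSubrep E2.rep (LinearMap.range f) := by
      intro b w hw
      obtain ⟨v, rfl⟩ := hw
      obtain ⟨a, rfl⟩ := conjHom_surjective σ₀ b
      exact ⟨E1.rep a v, hhom a v⟩
    rcases hE2.2 _ hsub with hbot | htop
    · exfalso
      apply hne
      apply LinearMap.ext
      intro v
      have hv : f v ∈ LinearMap.range f := LinearMap.mem_range_self f v
      rw [hbot] at hv
      simpa using hv
    · intro w
      have hv : w ∈ LinearMap.range f := htop ▸ Submodule.mem_top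
      exact hv
  exact ⟨LinearEquiv.ofBijective f ⟨hinj, hsurj⟩, hhom⟩

end AuxClifford

/-- For `λ = λ^M` `p`-regular (`p` odd) with
`D^λ↓_{A_n} ≅ E^λ_+ ⊕ E^λ_-`, and any finite-dimensional `FΣ_n`-module `V`:
`dim Hom_{A_n}(V↓, Hom_F(E^λ_+ ⊕ E^λ_-, E^λ_±))
 = dim Hom_{A_n}(Hom_F(E^λ_±, E^λ_+ ⊕ E^λ_-), V*↓)
 = dim Hom_{Σ_n}(V, End_F(D^λ))`. -/
theorem statement_6 (F : Type) [Field F] [IsAlgClosed F] (p : ℕ) (hp3 : 3 ≤ p)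
    [CharP F p] (n : ℕ) (T : SMTheory F p n)
    (lam : Ptn) (h1 : IsPtnOf lam n) (h2 : PReg p lam) (hmull : T.mull lam = lam)
    (E1 E2 : RepOb F (alternatingGroup (Fin n)))
    (hE1 : Irr E1.rep) (hE2 : Irr E2.rep) (hni : ¬ RepIso E1.rep E2.rep)
    (hsplit : RepIso (resAlt (T.D lam).rep) (prodRep E1.rep E2.rep))
    (V : Type) [AddCommGroup V] [Module F V] [FiniteDimensional F V]
    (ρ : Representation F (Equiv.Perm (Fin n)) V) :
    homDim (resAlt ρ) ((prodRep E1.rep E2.rep).linHom E1.rep) =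
      homDim (E1.rep.linHom (prodRep E1.rep E2.rep)) (resAlt ρ.dual) ∧
    homDim (resAlt ρ) ((prodRep E1.rep E2.rep).linHom E1.rep) =
      homDim ρ ((T.D lam).rep.linHom (T.D lam).rep) := by
  -- finite-dimensionality of `D^λ` and of `E₁`, `E₂`
  obtain ⟨U, hU, ψ, hsurj, hψ⟩ := T.D_perm lam h1 h2
  haveI : Finite (Equiv.Perm (Fin n) ⧸ youngSubgroup lam n) := Quotient.finite _
  haveI : Fintype (Equiv.Perm (Fin n) ⧸ youngSubgroup lam n) := Fintype.ofFinite _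
  haveI : FiniteDimensional F ((Equiv.Perm (Fin n) ⧸ youngSubgroup lam n) →₀ F) :=
    Module.Finite.equiv (Finsupp.linearEquivFunOnFinite F F _).symm
  haveI fdD : FiniteDimensional F (T.D lam).carrier := Module.Finite.of_surjective ψ hsurj
  obtain ⟨e0, he0⟩ := id hsplit
  haveI : FiniteDimensional F (E1.carrier × E2.carrier) := Module.Finite.equiv e0
  haveI : FiniteDimensional F E1.carrier :=
    Module.Finite.of_surjective (LinearMap.fst F E1.carrier E2.carrier) Prod.fst_surjective
  haveI : FiniteDimensional F E2.carrier :=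
    Module.Finite.of_surjective (LinearMap.snd F E1.carrier E2.carrier) Prod.snd_surjective
  -- `2 ≠ 0` in `F`
  have hprime : p.Prime := by
    rcases CharP.char_is_prime_or_zero F p with h | h
    · exact h
    · omega
  have h2F : (2 : F) ≠ 0 := by
    intro h
    have h2 : ((2 : ℕ) : F) = 0 := by norm_num at h ⊢; exact h
    rw [CharP.cast_eq_zero_iff F p] at h2
    have := Nat.le_of_dvd (by norm_num) h2
    omega
  -- existence of an odd permutation (otherwise contradiction with irreducibility)
  by_cases hodd : ∃ σ₀ : Equiv.Perm (Fin n), Equiv.Perm.sign σ₀ = -1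
  swap
  · exfalso
    push_neg at hodd
    apply irr_prod_stab_false (T.D lam).rep (T.D_irr lam h1 h2) hE1.1 hE2.1 e0
    intro g x hx
    have hg : Equiv.Perm.sign g = 1 := (Int.units_eq_one_or _).resolve_right (hodd g)
    have h := he0 ⟨g, Equiv.Perm.mem_alternatingGroup.mpr hg⟩ x
    simp only [LinearEquiv.coe_coe] at h
    rw [show (T.D lam).rep g x =
      resAlt (T.D lam).rep (⟨g, Equiv.Perm.mem_alternatingGroup.mpr hg⟩ :
        alternatingGroup (Fin n)) x from rfl]
    rw [h]
    show E2.rep ⟨g, _⟩ (e0 x).2 = 0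
    rw [hx, map_zero]
  obtain ⟨σ₀, hσ₀⟩ := hodd
  -- Clifford theory: conjugation by `σ₀` swaps `E₁` and `E₂`
  have iso1 : RepIso E1.rep (E2.rep.comp (conjHom σ₀)) :=
    clifford_twist (T.D lam).rep (T.D_irr lam h1 h2) hσ₀ E1 E2 hE1 hE2 hsplit
  have iso2 : RepIso E2.rep (E1.rep.comp (conjHom σ₀)) :=
    clifford_twist (T.D lam).rep (T.D_irr lam h1 h2) hσ₀ E2 E1 hE2 hE1
      (RepIso.trans hsplit (prodRep_swap E1.rep E2.rep))
  have hWc : RepIso ((prodRep E1.rep E2.rep).comp (conjHom σ₀)) (prodRep E1.rep E2.rep) := by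
    rw [prodRep_comp]
    exact RepIso.trans (RepIso.prodCongr iso2.symm iso1.symm) (prodRep_swap E2.rep E1.rep)
  -- Claim 1: conjugation swap for hom spaces
  have claim1 : homDim (resAlt ρ) ((prodRep E1.rep E2.rep).linHom E1.rep) =
      homDim (resAlt ρ) ((prodRep E1.rep E2.rep).linHom E2.rep) := by
    conv_lhs => rw [← homDim_comp_eq (conjHom σ₀) (conjHom_surjective σ₀) (resAlt ρ)
      ((prodRep E1.rep E2.rep).linHom E1.rep)]
    rw [linHom_comp]
    rw [homDim_congr_left (resAlt_comp_conj ρ σ₀)]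
    exact homDim_congr_right _ (RepIso.linHomCongr hWc (RepIso.symm iso2))
  -- Claim 2: direct sum decomposition of `End(D^λ)↓`
  have hWres : RepIso (Representation.linHom (prodRep E1.rep E2.rep) (prodRep E1.rep E2.rep))
      (resAlt ((T.D lam).rep.linHom (T.D lam).rep)) := by
    rw [resAlt_linHom]
    exact RepIso.linHomCongr (RepIso.symm hsplit) (RepIso.symm hsplit)
  have claim2 : homDim (resAlt ρ) (resAlt ((T.D lam).rep.linHom (T.D lam).rep)) =
      homDim (resAlt ρ) ((prodRep E1.rep E2.rep).linHom E1.rep) +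
      homDim (resAlt ρ) ((prodRep E1.rep E2.rep).linHom E2.rep) := by
    calc homDim (resAlt ρ) (resAlt ((T.D lam).rep.linHom (T.D lam).rep))
        = homDim (resAlt ρ)
            (Representation.linHom (prodRep E1.rep E2.rep) (prodRep E1.rep E2.rep)) :=
          (homDim_congr_right _ hWres).symm
      _ = homDim (resAlt ρ) (prodRep ((prodRep E1.rep E2.rep).linHom E1.rep)
            ((prodRep E1.rep E2.rep).linHom E2.rep)) :=
          homDim_congr_right _ (RepIso.symm (linHom_prodRep_right _ _ _))
      _ = _ := homDim_prod_right _ _ _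
  -- Claim 3: restriction to `A_n`
  have claim3 := homDim_resAlt_add h2F hσ₀ ρ ((T.D lam).rep.linHom (T.D lam).rep)
  -- Claim 4: `End(D^λ) ⊗ sgn ≅ End(D^λ)`
  have claim4 : homDim ρ (((T.D lam).rep.linHom (T.D lam).rep).tprod (sgnRep F n)) =
      homDim ρ ((T.D lam).rep.linHom (T.D lam).rep) := by
    have ms := T.mull_spec lam h1 h2
    rw [hmull] at ms
    exact homDim_congr_right _ (RepIso.trans (repIso_linHom_tprod_sgn _ _)
      (RepIso.linHomCongr (RepIso.refl _) (RepIso.symm ms)))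
  -- Goal 2
  have goal2 : homDim (resAlt ρ) ((prodRep E1.rep E2.rep).linHom E1.rep) =
      homDim ρ ((T.D lam).rep.linHom (T.D lam).rep) := by
    rw [← claim1] at claim2
    rw [claim4] at claim3
    rw [claim3] at claim2
    omega
  -- Goal 1
  have goal1 : homDim (E1.rep.linHom (prodRep E1.rep E2.rep)) (resAlt ρ.dual) =
      homDim (resAlt ρ) ((prodRep E1.rep E2.rep).linHom E1.rep) := by
    rw [resAlt_dual, homDim_dual_flip]
    exact (homDim_congr_right _ (repIso_linHom_dual E1.rep (prodRep E1.rep E2.rep))).symm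
  exact ⟨goal1.symm, goal2⟩

end IrrTensor
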